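/- Let (Γ, α) be a voltage digraph with group ℤ_k and polynomial matrix B(z), whose (u,v) entry is Σ_{i∈ℤ_k} α_i z^i with α_i the number of arcs uv with voltage i. Then for every ℓ ≥ 0, if (B(z)^ℓ)_{uv} = β_0 + β_1 z + ⋯ + β_{k−1} z^{k−1} (computed in ℂ[z]/(z^k − 1)), then β_i equals the number of walks of length ℓ in the lift Γ^α from (u,h) to (v, h+i), for every h ∈ ℤ_k. -/

import Mathlib

open Finset Matrix

/-- Walks in a cyclic lift via powers of the polynomial matrix: if
`(B(z)^ℓ)_{uv} = β₀ + β₁ z + ⋯ + β_{k-1} z^{k-1}` (computed in `ℕ[z]/(z^k - 1)`, i.e. in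
the monoid algebra of `ZMod k`), then `βᵢ` is the number of walks of length `ℓ` in the
lift `Γ^α` from `(u,h)` to `(v,h+i)`, for every `h`. -/
theorem stmt_6 {V E : Type*} [Fintype V] [Fintype E] [DecidableEq V] (k : ℕ) [NeZero k]
    (src tgt : E → V) (α : E → ZMod k)
    (Bpoly : Matrix V V (AddMonoidAlgebra ℕ (ZMod k)))
    (hB : ∀ u v : V, Bpoly u v = ∑ e ∈ univ.filter (fun e : E => src e = u ∧ tgt e = v),
        AddMonoidAlgebra.single (α e) 1)
    (liftAdj : Matrix (V × ZMod k) (V × ZMod k) ℕ)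
    (hlift : ∀ p q : V × ZMod k, liftAdj p q =
      (univ.filter (fun e : E => src e = p.1 ∧ tgt e = q.1 ∧ q.2 = p.2 + α e)).card) :
    ∀ (ℓ : ℕ) (u v : V) (h i : ZMod k),
      ((Bpoly ^ ℓ) u v).coeff i = (liftAdj ^ ℓ) (u, h) (v, h + i) := by
  intro ℓ
  induction ℓ with
  | zero =>
    intro u v h i
    simp only [pow_zero, Matrix.one_apply]
    by_cases huv : u = v
    · subst huv
      rw [if_pos rfl]
      have h1 : (1 : AddMonoidAlgebra ℕ (ZMod k)).coeff i
          = if i = 0 then 1 else 0 := by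
        rw [AddMonoidAlgebra.one_def, AddMonoidAlgebra.coeff_single, Finsupp.single_apply]
        simp [eq_comm]
      rw [h1]
      by_cases hi : i = 0
      · subst hi; simp
      · rw [if_neg hi, if_neg]
        intro hc
        exact hi (by
          have := (Prod.ext_iff.mp hc).2
          simpa using this.symm)
    · rw [if_neg huv]
      have : (0 : AddMonoidAlgebra ℕ (ZMod k)).coeff i = 0 := rfl
      rw [this, if_neg]
      intro hc
      exact huv (Prod.ext_iff.mp hc).1
  | succ ℓ ih =>
    intro u v h i
    rw [pow_succ, pow_succ, Matrix.mul_apply, Matrix.mul_apply, AddMonoidAlgebra.coeff_sum, Finsupp.finset_sum_apply,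
      Fintype.sum_prod_type]
    refine Finset.sum_congr rfl fun w _ => ?_
    rw [hB, Finset.mul_sum, AddMonoidAlgebra.coeff_sum, Finsupp.finset_sum_apply]
    have hLHS : ∀ e ∈ univ.filter (fun e : E => src e = w ∧ tgt e = v),
        (((Bpoly ^ ℓ) u w * AddMonoidAlgebra.single (α e) 1 :
          AddMonoidAlgebra ℕ (ZMod k))).coeff i
        = (liftAdj ^ ℓ) (u, h) (w, h + i - α e) := by
      intro e _
      rw [AddMonoidAlgebra.coeff_mul_single_apply, mul_one, ← sub_eq_add_neg, ih u w h (i - α e),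
        ← add_sub_assoc]
    rw [Finset.sum_congr rfl hLHS, Finset.sum_filter]
    have hRHS : ∀ g : ZMod k,
        (liftAdj ^ ℓ) (u, h) (w, g) * liftAdj (w, g) (v, h + i)
        = ∑ e : E, if src e = w ∧ tgt e = v ∧ h + i = g + α e
            then (liftAdj ^ ℓ) (u, h) (w, g) else 0 := by
      intro g
      rw [hlift, Finset.card_filter, Finset.mul_sum]
      simp [mul_ite]
    rw [Finset.sum_congr rfl fun g _ => hRHS g, Finset.sum_comm]
    refine Finset.sum_congr rfl fun e _ => ?_
    by_cases he : src e = w ∧ tgt e = v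
    · rw [if_pos he]
      have : ∀ g : ZMod k, (src e = w ∧ tgt e = v ∧ h + i = g + α e) ↔ g = h + i - α e := by
        intro g
        constructor
        · rintro ⟨-, -, hg⟩; rw [eq_sub_iff_add_eq, hg.symm]
        · rintro rfl; exact ⟨he.1, he.2, by rw [sub_add_cancel]⟩
      simp only [this]
      rw [Finset.sum_ite_eq' univ (h + i - α e) (fun _ => (liftAdj ^ ℓ) (u, h) (w, _))]
      simp
    · rw [if_neg he]
      refine (Finset.sum_eq_zero fun g _ => ?_).symm
      rw [if_neg]
      exact fun hc => he ⟨hc.1, hc.2.1⟩
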